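/- arXiv:math/0005208 — 7 statements merged into one kernel-verified Lean document; each statement's English description precedes it below -/
import Mathlib

section
/- Let κ be an uncountable cardinal such that every coloring F of the pairs of ordinals below κ with values in Fin 2 × Fin 2 has a homogeneous set of cardinality κ. Let B₀ and B₁ be complete Boolean algebras each satisfying the κ-chain condition. Then the product forcing satisfies the κ-chain condition: every set A of pairs (p, q) ∈ B₀ × B₁ with p ≠ ⊥ and q ≠ ⊥ that is pairwise incompatible — i.e. for any two distinct (p, q), (p', q') ∈ A either p ⊓ p' = ⊥ or q ⊓ q' = ⊥ — has cardinality strictly less than κ. -/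
lemma antichain_coord_aux {κ : Cardinal} {ι : Type} [LinearOrder ι] {B : Type}
    [CompleteBooleanAlgebra B]
    (H : Set ι) (hH : Cardinal.mk H = κ)
    (g : ι → B) (hne : ∀ a ∈ H, g a ≠ ⊥)
    (hmeet : ∀ a ∈ H, ∀ b ∈ H, a < b → g a ⊓ g b = ⊥)
    (hcc : ∀ A : Set B, (∀ p ∈ A, p ≠ ⊥) →
      (∀ p ∈ A, ∀ q ∈ A, p ≠ q → p ⊓ q = ⊥) → Cardinal.mk A < κ) :
    False := by
  have hmeet' : ∀ a ∈ H, ∀ b ∈ H, a ≠ b → g a ⊓ g b = ⊥ := by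
    intro a ha b hb hab
    rcases hab.lt_or_gt with h | h
    · exact hmeet a ha b hb h
    · rw [inf_comm]; exact hmeet b hb a ha h
  have hinj : Set.InjOn g H := by
    intro a ha b hb hgab
    by_contra hab
    have h := hmeet' a ha b hb hab
    rw [← hgab, inf_idem] at h
    exact hne a ha h
  have h1 : Cardinal.mk (g '' H) = κ := by
    rw [Cardinal.mk_image_eq_of_injOn g H hinj, hH]
  have h2 := hcc (g '' H) ?_ ?_
  · rw [h1] at h2; exact lt_irrefl κ h2
  · rintro p ⟨a, ha, rfl⟩; exact hne a ha
  · rintro p ⟨a, ha, rfl⟩ q ⟨b, hb, rfl⟩ hpq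
    exact hmeet' a ha b hb (fun h => hpq (by rw [h]))

/-- If `κ` is an uncountable cardinal with the partition property
`κ → (κ)²_{2×2}` (every coloring of pairs of ordinals below `κ` with values in
`Fin 2 × Fin 2` has a homogeneous set of cardinality `κ`), and `B₀`, `B₁` are
complete Boolean algebras satisfying the `κ`-chain condition, then the product
satisfies the `κ`-chain condition. -/
theorem product_kappa_cc (κ : Cardinal)
    (hκ : Cardinal.aleph0 < κ)
    (hpart : ∀ F : κ.ord.ToType → κ.ord.ToType → Fin 2 × Fin 2,
      ∃ (H : Set κ.ord.ToType) (c : Fin 2 × Fin 2),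
        Cardinal.mk H = κ ∧ ∀ a ∈ H, ∀ b ∈ H, a < b → F a b = c)
    (B₀ B₁ : Type) [CompleteBooleanAlgebra B₀] [CompleteBooleanAlgebra B₁]
    (hcc₀ : ∀ A : Set B₀, (∀ p ∈ A, p ≠ ⊥) →
      (∀ p ∈ A, ∀ q ∈ A, p ≠ q → p ⊓ q = ⊥) → Cardinal.mk A < κ)
    (hcc₁ : ∀ A : Set B₁, (∀ q ∈ A, q ≠ ⊥) →
      (∀ p ∈ A, ∀ q ∈ A, p ≠ q → p ⊓ q = ⊥) → Cardinal.mk A < κ) :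
    ∀ A : Set (B₀ × B₁),
      (∀ pq ∈ A, pq.1 ≠ ⊥ ∧ pq.2 ≠ ⊥) →
      (∀ pq ∈ A, ∀ pq' ∈ A, pq ≠ pq' → pq.1 ⊓ pq'.1 = ⊥ ∨ pq.2 ⊓ pq'.2 = ⊥) →
      Cardinal.mk A < κ := by
  classical
  intro A hne hanti
  by_contra hlt
  push_neg at hlt
  obtain ⟨f⟩ : Nonempty (κ.ord.ToType ↪ A) := by
    rw [← Cardinal.le_def, Cardinal.mk_ord_toType]
    exact hlt
  set F : κ.ord.ToType → κ.ord.ToType → Fin 2 × Fin 2 := fun a b =>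
    (if (f a : B₀ × B₁).1 ⊓ (f b : B₀ × B₁).1 = ⊥ then 0 else 1,
     if (f a : B₀ × B₁).2 ⊓ (f b : B₀ × B₁).2 = ⊥ then 0 else 1) with hF
  obtain ⟨H, c, hH, hhom⟩ := hpart F
  -- H has two distinct elements
  have hinf : H.Infinite := by
    rw [← Set.infinite_coe_iff, ← Cardinal.aleph0_le_mk_iff, hH]
    exact hκ.le
  obtain ⟨a, ha, b, hb, hab⟩ := hinf.nontrivial
  have hfne : ∀ x ∈ H, ∀ y ∈ H, x < y → (f x : B₀ × B₁) ≠ (f y : B₀ × B₁) := by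
    intro x hx y hy hxy h
    exact absurd (Subtype.coe_injective h |> f.injective) (ne_of_lt hxy)
  have hpair : ∀ x ∈ H, ∀ y ∈ H, x < y →
      (f x : B₀ × B₁).1 ⊓ (f y : B₀ × B₁).1 = ⊥ ∨
      (f x : B₀ × B₁).2 ⊓ (f y : B₀ × B₁).2 = ⊥ :=
    fun x hx y hy hxy =>
      hanti (f x) (f x).2 (f y) (f y).2 (hfne x hx y hy hxy)
  -- decide the color using one concrete pair
  obtain ⟨x, hx, y, hy, hxy⟩ : ∃ x ∈ H, ∃ y ∈ H, x < y := by
    rcases hab.lt_or_gt with h | h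
    · exact ⟨a, ha, b, hb, h⟩
    · exact ⟨b, hb, a, ha, h⟩
  have hc : c.1 = 0 ∨ c.2 = 0 := by
    have hFxy := hhom x hx y hy hxy
    rcases hpair x hx y hy hxy with h | h
    · left
      rw [← hFxy, hF]; simp [h]
    · right
      rw [← hFxy, hF]; simp [h]
  rcases hc with hc | hc
  · refine antichain_coord_aux H hH (fun z => (f z : B₀ × B₁).1)
      (fun z hz => (hne (f z) (f z).2).1) ?_ hcc₀
    intro u hu v hv huv
    have hF' := hhom u hu v hv huv
    by_contra h
    have : (F u v).1 = 1 := by rw [hF]; simp [h]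
    rw [hF', hc] at this
    exact absurd this (by decide)
  · refine antichain_coord_aux H hH (fun z => (f z : B₀ × B₁).2)
      (fun z hz => (hne (f z) (f z).2).2) ?_ hcc₁
    intro u hu v hv huv
    have hF' := hhom u hu v hv huv
    by_contra h
    have : (F u v).2 = 1 := by rw [hF]; simp [h]
    rw [hF', hc] at this
    exact absurd this (by decide)
end

section
/- Let κ be a cardinal with κ^{<κ} = κ. Let B be a complete Boolean algebra satisfying the κ-chain condition and let X ⊆ B with |X| ≤ κ. Then there exists a set S ⊆ B with X ⊆ S and |S| ≤ κ which is the carrier of a complete subalgebra of B: ⊥ ∈ S and ⊤ ∈ S, S is closed under complementation, and for every subset T ⊆ S the supremum of T computed in B belongs to S. -/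
open Cardinal Set Ordinal

section SCCAux

variable {B : Type} [CompleteBooleanAlgebra B]

/-- `κ^{<κ} = κ` and `κ` infinite imply `κ` is regular. -/
lemma scc_isRegular (κ : Cardinal.{0}) (hκ : κ ^< κ = κ) (hinf : ℵ₀ ≤ κ) : κ.IsRegular := by
  refine ⟨hinf, ?_⟩
  by_contra h
  push_neg at h
  have h2 : κ ^ (κ.ord.cof) ≤ κ ^< κ := le_powerlt κ h
  rw [hκ] at h2
  exact absurd h2 (not_le.2 (Cardinal.lt_power_cof hinf))

/-- A subset of `κ.ord.ToType` of size `< κ` is bounded, for regular `κ`. -/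
lemma scc_bounded (κ : Cardinal.{0}) (hreg : κ.IsRegular) (s : Set κ.ord.ToType)
    (hs : #s < κ) : ∃ w, ∀ x ∈ s, x < w := by
  refine not_isCofinal_iff.1 fun hc => ?_
  exact (hs.trans_le (hreg.2.trans_eq (Ordinal.cof_toType _).symm)).not_ge (Order.cof_le hc)

/-- Every cardinal `< κ` is dominated by the cardinality of some initial segment. -/
lemma scc_cover (κ : Cardinal.{0}) (hreg : κ.IsRegular) (μ : Cardinal.{0}) (hμ : μ < κ) :
    ∃ w : κ.ord.ToType, μ ≤ #(Set.Iio w) := by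
  have h1 : #(μ.ord.ToType) ≤ #(κ.ord.ToType) := by
    rw [mk_ord_toType, mk_ord_toType]; exact hμ.le
  obtain ⟨f⟩ := Cardinal.le_def _ _ |>.1 h1
  have h2 : #(Set.range f) < κ := mk_range_le.trans_lt (by rw [mk_ord_toType]; exact hμ)
  obtain ⟨w, hw⟩ := scc_bounded κ hreg _ h2
  refine ⟨w, ?_⟩
  rw [← mk_ord_toType μ]
  exact ⟨⟨fun i => ⟨f i, hw _ (mem_range_self i)⟩, fun i j hij => f.injective (by
    simpa using congrArg Subtype.val hij)⟩⟩

/-- In a `κ`-cc complete Boolean algebra, every supremum is the supremum of a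
subfamily of size `< κ`. -/
lemma scc_exists_small (κ : Cardinal.{0})
    (hcc : ∀ A : Set B, (∀ p ∈ A, p ≠ ⊥) →
      (∀ p ∈ A, ∀ q ∈ A, p ≠ q → p ⊓ q = ⊥) → Cardinal.mk A < κ)
    (T : Set B) : ∃ T' : Set B, T' ⊆ T ∧ #T' < κ ∧ sSup T' = sSup T := by
  set P : Set (Set B) := {A | (∀ p ∈ A, p ≠ ⊥) ∧
      (∀ p ∈ A, ∀ q ∈ A, p ≠ q → p ⊓ q = ⊥) ∧ ∀ p ∈ A, ∃ t ∈ T, p ≤ t} with hP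
  obtain ⟨A, hA⟩ := zorn_subset P (by
    intro c hcP hchain
    refine ⟨⋃₀ c, ⟨?_, ?_, ?_⟩, fun s hs => subset_sUnion_of_mem hs⟩
    · rintro p ⟨s, hs, hp⟩
      exact (hcP hs).1 p hp
    · rintro p ⟨s1, hs1, hp⟩ q ⟨s2, hs2, hq⟩ hpq
      rcases eq_or_ne s1 s2 with rfl | hne
      · exact (hcP hs1).2.1 p hp q hq hpq
      · rcases hchain hs1 hs2 hne with h | h
        · exact (hcP hs2).2.1 p (h hp) q hq hpq
        · exact (hcP hs1).2.1 p hp q (h hq) hpq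
    · rintro p ⟨s, hs, hp⟩
      exact (hcP hs).2.2 p hp)
  obtain ⟨h1, h2, h3⟩ := hA.1
  choose! f hfT hf using h3
  refine ⟨f '' A, ?_, lt_of_le_of_lt mk_image_le (hcc A h1 h2), le_antisymm
    (sSup_le_sSup ?_) (sSup_le fun t ht => ?_)⟩
  · rintro x ⟨p, hp, rfl⟩; exact hfT p hp
  · rintro x ⟨p, hp, rfl⟩; exact hfT p hp
  · set u := sSup (f '' A) with hu
    by_contra hle
    set b := t ⊓ uᶜ with hb
    have hbne : b ≠ ⊥ := by
      intro h
      apply hle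
      have ht2 : t = (t ⊓ u) ⊔ (t ⊓ uᶜ) := by
        rw [← inf_sup_left, sup_compl_eq_top, inf_top_eq]
      rw [hb] at h
      rw [ht2, h, sup_bot_eq]
      exact inf_le_right
    have hau : ∀ p ∈ A, p ≤ u := fun p hp =>
      (hf p hp).trans (le_sSup (mem_image_of_mem f hp))
    have hdisj : ∀ p ∈ A, b ⊓ p = ⊥ := by
      intro p hp
      have h5 : b ⊓ p ≤ uᶜ ⊓ u := inf_le_inf inf_le_right (hau p hp)
      rwa [compl_inf_eq_bot, le_bot_iff] at h5
    have hbA : b ∉ A := by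
      intro h
      apply hbne
      have h6 : b ≤ u ⊓ uᶜ := le_inf (hau b h) inf_le_right
      rwa [inf_compl_eq_bot, le_bot_iff] at h6
    have hins : insert b A ∈ P := by
      refine ⟨?_, ?_, ?_⟩
      · rintro p (rfl | hp)
        · exact hbne
        · exact h1 p hp
      · rintro p (rfl | hp) q (rfl | hq) hpq
        · exact absurd rfl hpq
        · exact hdisj q hq
        · rw [inf_comm]; exact hdisj p hp
        · exact h2 p hp q hq hpq
      · rintro p (rfl | hp)
        · exact ⟨t, ht, inf_le_left⟩
        · exact ⟨f p, hfT p hp, hf p hp⟩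
    exact hbA (hA.2 hins (subset_insert b A) (mem_insert b A))

/-- Counting subsets of size `< κ`. -/
lemma scc_count (κ : Cardinal.{0}) (hκ : κ ^< κ = κ) (hinf : ℵ₀ ≤ κ)
    (s : Set B) (hs : #s ≤ κ) : #{t : Set B | t ⊆ s ∧ #t < κ} ≤ κ := by
  have hreg := scc_isRegular κ hκ hinf
  have hsub : {t : Set B | t ⊆ s ∧ #t < κ} ⊆
      ⋃ (w : κ.ord.ToType), {t : Set B | t ⊆ s ∧ #t ≤ #(Set.Iio w)} := by
    rintro t ⟨hts, htκ⟩
    obtain ⟨w, hw⟩ := scc_cover κ hreg (#t) htκ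
    exact mem_iUnion.2 ⟨w, hts, hw⟩
  have hW : #(κ.ord.ToType) = κ := mk_ord_toType κ
  calc #{t : Set B | t ⊆ s ∧ #t < κ}
      ≤ #(⋃ (w : κ.ord.ToType), {t : Set B | t ⊆ s ∧ #t ≤ #(Set.Iio w)}) :=
        mk_le_mk_of_subset hsub
    _ ≤ #(κ.ord.ToType) * ⨆ w, #{t : Set B | t ⊆ s ∧ #t ≤ #(Set.Iio w)} :=
        mk_iUnion_le _
    _ ≤ κ * κ := by
        rw [hW]
        refine mul_le_mul_right (ciSup_le' fun w => ?_) κ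
        calc #{t : Set B | t ⊆ s ∧ #t ≤ #(Set.Iio w)}
            ≤ max #s ℵ₀ ^ #(Set.Iio w) := mk_bounded_subset_le s _
          _ ≤ κ ^ #(Set.Iio w) := power_le_power_right (max_le hs hinf)
          _ ≤ κ ^< κ := le_powerlt κ (mk_Iio_ord_toType w)
          _ = κ := hκ
    _ = κ := mul_eq_self hinf

/-- One step of the closure: add complements and suprema of small subsets. -/
def sccStep (κ : Cardinal.{0}) (s : Set B) : Set B :=
  s ∪ (compl '' s) ∪ (sSup '' {t : Set B | t ⊆ s ∧ #t < κ})

/-- The transfinite iteration of `sccStep` along `κ.ord.ToType`, starting from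
`X ∪ {⊥, ⊤}` and taking unions at every step. -/
noncomputable def sccStage (κ : Cardinal.{0}) (X : Set B) : κ.ord.ToType → Set B := fun w =>
  sccStep κ (X ∪ {⊥, ⊤} ∪ ⋃ (w' : κ.ord.ToType) (_ : w' < w), sccStage κ X w')
termination_by w => w
decreasing_by assumption

/-- The "previous stages" set. -/
noncomputable def sccPrev (κ : Cardinal.{0}) (X : Set B) (w : κ.ord.ToType) : Set B :=
  X ∪ {⊥, ⊤} ∪ ⋃ (w' : κ.ord.ToType) (_ : w' < w), sccStage κ X w'

lemma sccStage_eq (κ : Cardinal.{0}) (X : Set B) (w : κ.ord.ToType) :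
    sccStage κ X w = sccStep κ (sccPrev κ X w) := by
  rw [sccStage]; rfl

lemma sccPrev_subset_stage (κ : Cardinal.{0}) (X : Set B) (w : κ.ord.ToType) :
    sccPrev κ X w ⊆ sccStage κ X w := by
  rw [sccStage_eq]
  exact subset_union_left.trans subset_union_left

lemma sccStage_subset_prev (κ : Cardinal.{0}) (X : Set B) {w w' : κ.ord.ToType} (h : w' < w) :
    sccStage κ X w' ⊆ sccPrev κ X w := fun x hx =>
  subset_union_right (mem_iUnion.2 ⟨w', mem_iUnion.2 ⟨h, hx⟩⟩)

lemma scc_X_subset_stage (κ : Cardinal.{0}) (X : Set B) (w : κ.ord.ToType) :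
    X ⊆ sccStage κ X w :=
  (subset_union_left.trans subset_union_left).trans (sccPrev_subset_stage κ X w)

lemma scc_bot_top_mem (κ : Cardinal.{0}) (X : Set B) (w : κ.ord.ToType) :
    (⊥ : B) ∈ sccStage κ X w ∧ (⊤ : B) ∈ sccStage κ X w := by
  constructor <;> [skip; skip] <;>
  · apply sccPrev_subset_stage κ X w
    apply mem_union_left
    apply mem_union_right
    simp

lemma scc_compl_mem (κ : Cardinal.{0}) (X : Set B) {x : B} {w w2 : κ.ord.ToType}
    (hx : x ∈ sccStage κ X w) (h : w < w2) : xᶜ ∈ sccStage κ X w2 := by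
  rw [sccStage_eq]
  exact mem_union_left _ (mem_union_right _
    (mem_image_of_mem compl (sccStage_subset_prev κ X h hx)))

lemma scc_sSup_mem (κ : Cardinal.{0}) (X : Set B) {t : Set B} {w : κ.ord.ToType}
    (ht : t ⊆ sccPrev κ X w) (hcard : #t < κ) : sSup t ∈ sccStage κ X w := by
  rw [sccStage_eq]
  exact mem_union_right _ (mem_image_of_mem sSup ⟨ht, hcard⟩)

lemma scc_two_le (κ : Cardinal.{0}) (hinf : ℵ₀ ≤ κ) : (2 : Cardinal.{0}) ≤ κ :=
  le_trans (by exact_mod_cast (Cardinal.nat_lt_aleph0 2).le) hinf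

lemma scc_pair_le (κ : Cardinal.{0}) (hinf : ℵ₀ ≤ κ) : #({⊥, ⊤} : Set B) ≤ κ := by
  refine le_trans ?_ (scc_two_le κ hinf)
  refine mk_insert_le.trans ?_
  rw [mk_singleton]
  norm_num

lemma scc_card_stage (κ : Cardinal.{0}) (X : Set B) (hκ : κ ^< κ = κ) (hinf : ℵ₀ ≤ κ)
    (hX : #X ≤ κ) (w : κ.ord.ToType) : #(sccStage κ X w) ≤ κ := by
  induction w using IsWellFounded.induction ((· < ·) : κ.ord.ToType → κ.ord.ToType → Prop) with
  | ind w IH =>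
  have hκκ : κ + κ = κ := add_eq_self hinf
  have hprev : #(sccPrev κ X w) ≤ κ := by
    have hJ : #(⋃ (w' : κ.ord.ToType) (_ : w' < w), sccStage κ X w') ≤ κ := by
      refine (mk_iUnion_le _).trans ?_
      rw [mk_ord_toType]
      refine le_trans (mul_le_mul_right (ciSup_le' fun w' => ?_) κ) (mul_eq_self hinf).le
      by_cases h : w' < w
      · simp only [h, iUnion_true]
        exact IH w' h
      · simp only [h, iUnion_false, iUnion_empty, mk_emptyCollection]
        exact zero_le (a := κ)
    calc #(sccPrev κ X w) ≤ #(X ∪ {⊥, ⊤} : Set B) +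
          #(⋃ (w' : κ.ord.ToType) (_ : w' < w), sccStage κ X w') := mk_union_le _ _
      _ ≤ (#X + #({⊥, ⊤} : Set B)) + κ := add_le_add (mk_union_le _ _) hJ
      _ ≤ (κ + κ) + κ := add_le_add (add_le_add hX (scc_pair_le κ hinf)) le_rfl
      _ = κ := by rw [hκκ, hκκ]
  rw [sccStage_eq]
  calc #(sccStep κ (sccPrev κ X w))
      ≤ (#(sccPrev κ X w) + #(compl '' (sccPrev κ X w))) +
        #(sSup '' {t : Set B | t ⊆ sccPrev κ X w ∧ #t < κ}) :=
        le_trans (mk_union_le _ _) (add_le_add (mk_union_le _ _) le_rfl)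
    _ ≤ (κ + κ) + κ := by
        refine add_le_add (add_le_add hprev (mk_image_le.trans hprev)) ?_
        exact mk_image_le.trans (scc_count κ hκ hinf _ hprev)
    _ = κ := by rw [hκκ, hκκ]

end SCCAux

/-- If `κ` is a cardinal with `κ^{<κ} = κ`, `B` is a complete Boolean algebra
with the `κ`-chain condition and `X ⊆ B` has cardinality `≤ κ`, then `X` is
contained in (the carrier of) a complete subalgebra of `B` of cardinality `≤ κ`. -/
theorem small_complete_subalgebra (κ : Cardinal)
    (hκ : κ ^< κ = κ)
    (B : Type) [CompleteBooleanAlgebra B]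
    (hcc : ∀ A : Set B, (∀ p ∈ A, p ≠ ⊥) →
      (∀ p ∈ A, ∀ q ∈ A, p ≠ q → p ⊓ q = ⊥) → Cardinal.mk A < κ)
    (X : Set B) (hX : Cardinal.mk X ≤ κ) :
    ∃ S : Set B, X ⊆ S ∧ Cardinal.mk S ≤ κ ∧ ⊥ ∈ S ∧ ⊤ ∈ S ∧
      (∀ x ∈ S, xᶜ ∈ S) ∧ ∀ T : Set B, T ⊆ S → sSup T ∈ S := by
  by_cases hinf : ℵ₀ ≤ κ
  · -- main case: `κ` infinite
    have hreg := scc_isRegular κ hκ hinf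
    have hpos : (0 : Ordinal) < κ.ord := by
      rw [Cardinal.lt_ord]
      simpa using lt_of_lt_of_le aleph0_pos hinf
    haveI hne : Nonempty κ.ord.ToType := toType_nonempty_iff_ne_zero.2 hpos.ne'
    haveI : NoMaxOrder κ.ord.ToType := Cardinal.noMaxOrder hinf
    refine ⟨⋃ w, sccStage κ X w, ?_, ?_, ?_, ?_, ?_, ?_⟩
    · exact fun x hx => mem_iUnion.2 ⟨Classical.arbitrary _, scc_X_subset_stage κ X _ hx⟩
    · refine (mk_iUnion_le _).trans ?_
      rw [mk_ord_toType]
      exact le_trans (mul_le_mul_right (ciSup_le' fun w =>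
        scc_card_stage κ X hκ hinf hX w) κ) (mul_eq_self hinf).le
    · exact mem_iUnion.2 ⟨Classical.arbitrary _, (scc_bot_top_mem κ X _).1⟩
    · exact mem_iUnion.2 ⟨Classical.arbitrary _, (scc_bot_top_mem κ X _).2⟩
    · intro x hx
      obtain ⟨w, hw⟩ := mem_iUnion.1 hx
      obtain ⟨w2, hw2⟩ := exists_gt w
      exact mem_iUnion.2 ⟨w2, scc_compl_mem κ X hw hw2⟩
    · intro T hT
      obtain ⟨T', hT'sub, hT'card, hT'sup⟩ := scc_exists_small κ hcc T
      rw [← hT'sup]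
      have hmem : ∀ t : T', ∃ w : κ.ord.ToType, (t : B) ∈ sccStage κ X w := by
        intro t
        exact mem_iUnion.1 (hT (hT'sub t.2))
      choose g hg using hmem
      have hrng : #(Set.range g) < κ := mk_range_le.trans_lt hT'card
      obtain ⟨w0, hw0⟩ := scc_bounded κ hreg _ hrng
      have hsubprev : T' ⊆ sccPrev κ X w0 := by
        intro t ht
        exact sccStage_subset_prev κ X (hw0 _ (mem_range_self ⟨t, ht⟩)) (hg ⟨t, ht⟩)
      exact mem_iUnion.2 ⟨w0, scc_sSup_mem κ X hsubprev hT'card⟩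
  · -- degenerate case: `κ` finite, so the algebra is `{⊥, ⊤}` (or trivial)
    push_neg at hinf
    have hκ2 : κ ≤ 2 := by
      by_contra h
      push_neg at h
      have h2 : κ ^ (2 : Cardinal) ≤ κ := by
        have := le_powerlt κ h
        rwa [hκ] at this
      rw [show (2 : Cardinal) = ((2 : ℕ) : Cardinal) by norm_num,
        Cardinal.power_natCast] at h2
      obtain ⟨n, rfl⟩ := Cardinal.lt_aleph0.1 hinf
      have hn : 2 < n := by exact_mod_cast h
      have hle : n ^ 2 ≤ n := by exact_mod_cast h2
      nlinarith
    have hall : ∀ b : B, b = ⊥ ∨ b = ⊤ := by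
      intro b
      by_contra h
      push_neg at h
      obtain ⟨hb, ht⟩ := h
      have hbc : bᶜ ≠ ⊥ := by
        intro h'
        apply ht
        rw [← compl_compl b, h', compl_bot]
      have hne : b ≠ bᶜ := by
        intro h'
        apply hb
        have : b ≤ b ⊓ bᶜ := le_inf le_rfl h'.le
        rwa [inf_compl_eq_bot, le_bot_iff] at this
      have hA := hcc {b, bᶜ} (by rintro p (rfl | rfl); exacts [hb, hbc])
        (by
          rintro p (rfl | rfl) q (rfl | rfl) hpq
          · exact absurd rfl hpq
          · exact inf_compl_eq_bot
          · exact compl_inf_eq_bot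
          · exact absurd rfl hpq)
      rw [Cardinal.mk_insert (by simpa using hne), mk_singleton] at hA
      have h2lt : (2 : Cardinal) < κ := by
        rw [show (2 : Cardinal) = 1 + 1 by norm_num]
        exact hA
      exact absurd hκ2 (not_le.2 h2lt)
    by_cases htriv : (⊤ : B) = ⊥
    · have hbot : ∀ b : B, b = ⊥ := fun b => by
        rcases hall b with h | h
        · exact h
        · rw [h, htriv]
      refine ⟨{⊥}, ?_, ?_, rfl, by simpa using htriv, ?_, ?_⟩
      · intro x hx; simp [hbot x]
      · rw [mk_singleton]
        have h1 : (1 : Cardinal) ≤ κ := by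
          have := hcc ∅ (by simp) (by simp)
          rw [mk_emptyCollection] at this
          exact Cardinal.one_le_iff_pos.2 this
        exact h1
      · intro x _; simp [hbot xᶜ]
      · intro T hT
        have : sSup T = ⊥ := by
          apply le_bot_iff.1
          exact sSup_le fun t ht => (hbot t).le
        simp [this]
    · have h2κ : (2 : Cardinal) ≤ κ := by
        have h1 := hcc {⊤} (by simpa using htriv) (by simp)
        rw [mk_singleton] at h1
        have h1' : (1 : Cardinal) < κ := by simpa using h1
        obtain ⟨n, rfl⟩ := Cardinal.lt_aleph0.1 hinf
        have hn : 1 < n := by exact_mod_cast h1'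
        exact_mod_cast Nat.succ_le_of_lt hn
      refine ⟨{⊥, ⊤}, ?_, ?_, by simp, by simp, ?_, ?_⟩
      · intro x hx
        rcases hall x with h | h <;> simp [h]
      · exact le_trans (mk_insert_le.trans (by rw [mk_singleton]; norm_num)) h2κ
      · rintro x (rfl | rfl)
        · simp
        · simp
      · intro T hT
        by_cases htop : ⊤ ∈ T
        · have : sSup T = ⊤ := top_le_iff.1 (le_sSup htop)
          simp [this]
        · have : sSup T = ⊥ := by
            apply le_bot_iff.1
            apply sSup_le
            intro t ht
            rcases hT ht with h | h
            · exact le_of_eq h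
            · exact absurd (h ▸ ht) htop
          simp [this]
end

section
/- Let F be a coloring assigning to each pair of countable ordinals β < γ < ω₁ a value F(β,γ) ∈ Fin 2, and let h : ω₁ → Fin 2. Suppose that for every α < ω₁ the set A_α = {γ < ω₁ : α < γ and F(β,γ) = h(β) for all β < α} has cardinality ℵ₁. Then there exist a set H ⊆ ω₁ of cardinality ℵ₁ and a value i ∈ Fin 2 such that F(α,β) = i for all α < β with α, β ∈ H. -/
open Cardinal Set

section BranchHomogAux

/-- Generic transfinite recursion: if from every countable set of "good" points we can
find a good point above all of them related by `R`, then there is a strictly monotone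
sequence of good points pairwise related by `R`. -/
lemma exists_strictMono_of_step {α : Type*} [LinearOrder α] [WellFoundedLT α]
    (hIio : ∀ t : α, (Set.Iio t).Countable)
    (Q : α → Prop) (R : α → α → Prop)
    (step : ∀ P : Set α, P.Countable → (∀ p ∈ P, Q p) →
      ∃ γ, Q γ ∧ ∀ p ∈ P, p < γ ∧ R p γ) :
    ∃ g : α → α, StrictMono g ∧ ∀ s t, s < t → R (g s) (g t) := by
  have wf : WellFounded ((· < ·) : α → α → Prop) := wellFounded_lt
  -- the step applied to a family indexed by `Iio t`
  have key : ∀ (t : α) (IH : ∀ s, s < t → {x : α // Q x}),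
      ∃ γ, Q γ ∧ ∀ p ∈ Set.range (fun s : Set.Iio t => (IH s.1 s.2).val), p < γ ∧ R p γ := by
    intro t IH
    haveI : Countable (Set.Iio t) := (hIio t).to_subtype
    refine step _ (Set.countable_range _) ?_
    rintro p ⟨s, rfl⟩
    exact (IH s.1 s.2).2
  set body : ∀ t : α, (∀ s, s < t → {x : α // Q x}) → {x : α // Q x} :=
    fun t IH => ⟨Classical.choose (key t IH), (Classical.choose_spec (key t IH)).1⟩ with hbody
  set g0 : α → {x : α // Q x} := wf.fix body with hg0
  have geq : ∀ t, g0 t = body t (fun s _ => g0 s) := fun t => wf.fix_eq body t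
  refine ⟨fun t => (g0 t).val, ?_, ?_⟩
  · intro s t hst
    have h1 := (Classical.choose_spec (key t (fun s _ => g0 s))).2
    have h2 := h1 ((g0 s).val) ⟨⟨s, hst⟩, rfl⟩
    calc (g0 s).val < _ := h2.1
    _ = (g0 t).val := by rw [geq t]
  · intro s t hst
    have h1 := (Classical.choose_spec (key t (fun s _ => g0 s))).2
    have h2 := h1 ((g0 s).val) ⟨⟨s, hst⟩, rfl⟩
    show R (g0 s).val (g0 t).val
    rw [geq t]
    exact h2.2

lemma countable_Iio_omega1 (t : (Cardinal.aleph 1).ord.ToType) : (Set.Iio t).Countable := by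
  rw [Cardinal.countable_iff_lt_aleph_one]
  exact Cardinal.mk_Iio_ord_toType t

lemma exists_bound_omega1 {P : Set (Cardinal.aleph 1).ord.ToType} (hP : P.Countable) :
    ∃ b, ∀ p ∈ P, p < b := by
  have hw : IsWellOrder (Cardinal.aleph 1).ord.ToType (· < ·) := isWellOrder_lt
  have hlt : #P < Ordinal.cof (Ordinal.type ((· < ·) : (Cardinal.aleph 1).ord.ToType → _ → Prop)) := by
    rw [Ordinal.type_toType, Cardinal.isRegular_aleph_one.cof_eq]
    exact (Cardinal.countable_iff_lt_aleph_one P).1 hP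
  by_contra hc
  push_neg at hc
  have hcof := Order.cof_le (s := P) hc
  rw [Ordinal.cof_type] at hlt
  exact absurd hcof (not_le.2 hlt)

end BranchHomogAux

/-- If `F` is a `2`-coloring of pairs of countable ordinals, `h : ω₁ → Fin 2`,
and for every `α < ω₁` the set of `γ > α` such that `F β γ = h β` for all
`β < α` has cardinality `ℵ₁`, then `F` has a homogeneous set of cardinality `ℵ₁`. -/
theorem homogeneous_set_from_branch
    (F : (Cardinal.aleph 1).ord.ToType → (Cardinal.aleph 1).ord.ToType → Fin 2)
    (h : (Cardinal.aleph 1).ord.ToType → Fin 2)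
    (hA : ∀ α : (Cardinal.aleph 1).ord.ToType,
      Cardinal.mk {γ : (Cardinal.aleph 1).ord.ToType | α < γ ∧ ∀ β < α, F β γ = h β}
        = Cardinal.aleph 1) :
    ∃ (H : Set (Cardinal.aleph 1).ord.ToType) (i : Fin 2),
      Cardinal.mk H = Cardinal.aleph 1 ∧
      ∀ α ∈ H, ∀ β ∈ H, α < β → F α β = i := by
  -- Step 1: find a single colour `i` such that above every `α` there is a suitable `γ`
  -- with `h γ = i`.
  have hne : ∀ α : (Cardinal.aleph 1).ord.ToType, {γ : (Cardinal.aleph 1).ord.ToType | α < γ ∧ ∀ β < α, F β γ = h β}.Nonempty := by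
    intro α
    rw [← Set.nonempty_coe_sort, ← Cardinal.mk_ne_zero_iff, hA α]
    exact (Cardinal.aleph_pos 1).ne'
  have hi : ∃ i : Fin 2, ∀ α : (Cardinal.aleph 1).ord.ToType, ∃ γ, α < γ ∧ h γ = i ∧ ∀ β < α, F β γ = h β := by
    by_contra hcon
    push_neg at hcon
    obtain ⟨α₀, hα₀⟩ := hcon 0
    obtain ⟨α₁, hα₁⟩ := hcon 1
    set α := max α₀ α₁
    obtain ⟨γ, hγ1, hγ2⟩ := hne α
    have hF0 : ∀ β < α₀, F β γ = h β := fun β hβ => hγ2 β (lt_of_lt_of_le hβ (le_max_left _ _))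
    have hF1 : ∀ β < α₁, F β γ = h β := fun β hβ => hγ2 β (lt_of_lt_of_le hβ (le_max_right _ _))
    have hor : h γ = 0 ∨ h γ = 1 := by omega
    rcases hor with h0 | h1
    · obtain ⟨β, hβ, hne'⟩ := hα₀ γ (lt_of_le_of_lt (le_max_left _ _) hγ1) h0
      exact hne' (hF0 β hβ)
    · obtain ⟨β, hβ, hne'⟩ := hα₁ γ (lt_of_le_of_lt (le_max_right _ _) hγ1) h1
      exact hne' (hF1 β hβ)
  obtain ⟨i, hi⟩ := hi
  -- Step 2: the recursion step.
  have step : ∀ P : Set (Cardinal.aleph 1).ord.ToType, P.Countable → (∀ p ∈ P, h p = i) →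
      ∃ γ, h γ = i ∧ ∀ p ∈ P, p < γ ∧ F p γ = i := by
    intro P hP hQ
    obtain ⟨b, hb⟩ := exists_bound_omega1 hP
    obtain ⟨γ, hγ1, hγ2, hγ3⟩ := hi b
    refine ⟨γ, hγ2, fun p hp => ⟨(hb p hp).trans hγ1, ?_⟩⟩
    rw [hγ3 p (hb p hp), hQ p hp]
  -- Step 3: build the strictly monotone homogeneous sequence.
  obtain ⟨g, hg, hgR⟩ := exists_strictMono_of_step countable_Iio_omega1
    (fun x => h x = i) (fun p γ => F p γ = i) step
  refine ⟨Set.range g, i, ?_, ?_⟩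
  · rw [Cardinal.mk_range_eq g hg.injective]
    exact Cardinal.mk_ord_toType _
  · rintro α ⟨s, rfl⟩ β ⟨t, rfl⟩ hlt
    exact hgR s t (hg.lt_iff_lt.1 hlt)
end

section
/- Let F be a coloring assigning to each pair of countable ordinals β < γ < ω₁ a value F(β,γ) ∈ ℕ, and let h : ω₁ → ℕ. Suppose that for every α < ω₁ the set A_α = {γ < ω₁ : α < γ and F(β,γ) = h(β) for all β < α} has cardinality ℵ₁. Then there exist a set H ⊆ ω₁ of cardinality ℵ₁ and a value i ∈ ℕ such that F(α,β) = i for all α < β with α, β ∈ H. -/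
open Cardinal Set

private lemma bdd_aux (s : Set (Cardinal.aleph 1).ord.ToType) (hs : #s ≤ ℵ₀) :
    ∃ c : (Cardinal.aleph 1).ord.ToType, ∀ x ∈ s, x < c := by
  haveI inst : IsWellOrder (Cardinal.aleph 1).ord.ToType (· < ·) := isWellOrder_lt
  have hb : Set.Bounded (· < ·) s := by
    have hlt : #s < Order.cof (Cardinal.aleph 1).ord.ToType := by
      rw [Ordinal.cof_toType, Cardinal.isRegular_aleph_one.cof_eq]
      exact hs.trans_lt Cardinal.aleph0_lt_aleph_one
    exact not_isCofinal_iff.mp fun hc => (Order.cof_le hc).not_gt hlt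
  exact hb

/-- If `F` is an `ℕ`-coloring of pairs of countable ordinals, `h : ω₁ → ℕ`,
and for every `α < ω₁` the set of `γ > α` such that `F β γ = h β` for all
`β < α` has cardinality `ℵ₁`, then `F` has a homogeneous set of cardinality `ℵ₁`. -/
theorem homogeneous_set_from_branch_nat
    (F : (Cardinal.aleph 1).ord.ToType → (Cardinal.aleph 1).ord.ToType → ℕ)
    (h : (Cardinal.aleph 1).ord.ToType → ℕ)
    (hA : ∀ α : (Cardinal.aleph 1).ord.ToType,
      Cardinal.mk {γ : (Cardinal.aleph 1).ord.ToType | α < γ ∧ ∀ β < α, F β γ = h β}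
        = Cardinal.aleph 1) :
    ∃ (H : Set (Cardinal.aleph 1).ord.ToType) (i : ℕ),
      Cardinal.mk H = Cardinal.aleph 1 ∧
      ∀ α ∈ H, ∀ β ∈ H, α < β → F α β = i := by
  classical
  -- each A α is nonempty
  have hne : ∀ α : (Cardinal.aleph 1).ord.ToType,
      ∃ γ : (Cardinal.aleph 1).ord.ToType, α < γ ∧ ∀ β < α, F β γ = h β := by
    intro α
    have h0 : #{γ : (Cardinal.aleph 1).ord.ToType | α < γ ∧ ∀ β < α, F β γ = h β} ≠ 0 := by
      rw [hA α]
      exact (Cardinal.aleph0_lt_aleph_one.trans_le' (by simp)).ne'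
    obtain ⟨⟨γ, hγ⟩⟩ := Cardinal.mk_ne_zero_iff.mp h0
    exact ⟨γ, hγ⟩
  -- key step for recursion
  have key : ∀ (α : (Cardinal.aleph 1).ord.ToType)
      (g : ∀ β : (Cardinal.aleph 1).ord.ToType, β < α → (Cardinal.aleph 1).ord.ToType),
      ∃ γ : (Cardinal.aleph 1).ord.ToType,
      (∀ β (hβ : β < α), g β hβ < γ) ∧ (∀ β (hβ : β < α), F (g β hβ) γ = h (g β hβ)) := by
    intro α g
    set s : Set (Cardinal.aleph 1).ord.ToType :=
      Set.range (fun b : Set.Iio α => g b.1 b.2) with hs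
    have hcount : #s ≤ ℵ₀ := by
      refine Cardinal.mk_range_le.trans ?_
      have := Cardinal.mk_Iio_ord_toType α
      rwa [← Cardinal.countable_iff_lt_aleph_one, ← Cardinal.le_aleph0_iff_set_countable] at this
    obtain ⟨c, hc⟩ := bdd_aux s hcount
    obtain ⟨γ, hγ1, hγ2⟩ := hne c
    refine ⟨γ, fun β hβ => ?_, fun β hβ => ?_⟩
    · exact (hc _ ⟨⟨β, hβ⟩, rfl⟩).trans hγ1
    · exact hγ2 _ (hc _ ⟨⟨β, hβ⟩, rfl⟩)
  -- define f by well-founded recursion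
  let f : (Cardinal.aleph 1).ord.ToType → (Cardinal.aleph 1).ord.ToType :=
    WellFoundedLT.fix (motive := fun _ => (Cardinal.aleph 1).ord.ToType)
      (fun α IH => (key α IH).choose)
  have feq : ∀ α, f α = (key α (fun β _ => f β)).choose :=
    fun α => WellFoundedLT.fix_eq _ α
  have fprop : ∀ α β, β < α → f β < f α ∧ F (f β) (f α) = h (f β) := by
    intro α β hβ
    obtain ⟨h1, h2⟩ := (key α (fun β _ => f β)).choose_spec
    rw [feq α]
    exact ⟨h1 β hβ, h2 β hβ⟩
  have fmono : StrictMono f := fun β α hβ => (fprop α β hβ).1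
  -- find a large fiber
  have hTcard : #(Cardinal.aleph 1).ord.ToType = Cardinal.aleph 1 := by
    rw [Cardinal.mk_toType, Cardinal.card_ord]
  have hfib : ∃ i : ℕ, ¬ #{α : (Cardinal.aleph 1).ord.ToType | h (f α) = i} ≤ ℵ₀ := by
    by_contra hcon
    push_neg at hcon
    have hu : (Set.univ : Set (Cardinal.aleph 1).ord.ToType)
        = ⋃ i : ℕ, {α | h (f α) = i} := by
      ext α; simp
    have hcc : (Set.univ : Set (Cardinal.aleph 1).ord.ToType).Countable := by
      rw [hu]
      exact Set.countable_iUnion fun i =>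
        Cardinal.mk_le_aleph0_iff.mp (hcon i)
    have hle : #(Set.univ : Set (Cardinal.aleph 1).ord.ToType) ≤ ℵ₀ :=
      Cardinal.mk_le_aleph0_iff.mpr hcc
    rw [Cardinal.mk_univ, hTcard] at hle
    exact Cardinal.aleph0_lt_aleph_one.not_ge hle
  obtain ⟨i, hi⟩ := hfib
  have hPcard : #{α : (Cardinal.aleph 1).ord.ToType | h (f α) = i} = Cardinal.aleph 1 := by
    refine le_antisymm (le_trans (Cardinal.mk_set_le _) (le_of_eq hTcard)) ?_
    rw [← not_lt, ← Cardinal.countable_iff_lt_aleph_one, ← Cardinal.le_aleph0_iff_set_countable]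
    exact hi
  refine ⟨f '' {α | h (f α) = i}, i, ?_, ?_⟩
  · rw [Cardinal.mk_image_eq fmono.injective, hPcard]
  · rintro α ⟨a, ha, rfl⟩ β ⟨b, hb, rfl⟩ hab
    have hab' : a < b := fmono.lt_iff_lt.mp hab
    rw [(fprop b a hab').2]
    exact ha
end

section
/- Let κ be a regular uncountable cardinal, F a coloring of pairs of ordinals below κ with values in Fin 2, and h : κ → Fin 2. Suppose that for every α < κ the set A_α = {γ < κ : α < γ and F(β,γ) = h(β) for all β < α} has cardinality κ. Then there exist a set H ⊆ κ of cardinality κ and a value i ∈ Fin 2 such that F(α,β) = i for all α < β with α, β ∈ H. -/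
/-- Auxiliary recursion: `brFix pk bd γ = pk (bd (brFix pk bd '' Set.Iio γ))`. -/
noncomputable def brFix {T : Type*} [LinearOrder T] [WellFoundedLT T]
    (pk : T → T) (bd : Set T → T) : T → T :=
  IsWellFounded.wf.fix (fun γ ih => pk (bd {x | ∃ β, ∃ hb : β < γ, ih β hb = x}))

theorem brFix_eq {T : Type*} [LinearOrder T] [WellFoundedLT T]
    (pk : T → T) (bd : Set T → T) (γ : T) :
    brFix pk bd γ = pk (bd (brFix pk bd '' Set.Iio γ)) := by
  rw [brFix, WellFounded.fix_eq]
  congr 2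
  ext x
  constructor
  · rintro ⟨β, hb, rfl⟩; exact ⟨β, hb, rfl⟩
  · rintro ⟨β, hb, rfl⟩; exact ⟨β, hb, rfl⟩

/-- If `κ` is a regular uncountable cardinal, `F` is a `2`-coloring of pairs
of ordinals below `κ`, `h : κ → Fin 2`, and for every `α < κ` the set of
`γ > α` such that `F β γ = h β` for all `β < α` has cardinality `κ`, then `F`
has a homogeneous set of cardinality `κ`. -/
theorem homogeneous_set_from_branch_regular (κ : Cardinal)
    (hreg : κ.IsRegular) (hκ : Cardinal.aleph0 < κ)
    (F : κ.ord.ToType → κ.ord.ToType → Fin 2)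
    (h : κ.ord.ToType → Fin 2)
    (hA : ∀ α : κ.ord.ToType,
      Cardinal.mk {γ : κ.ord.ToType | α < γ ∧ ∀ β < α, F β γ = h β} = κ) :
    ∃ (H : Set κ.ord.ToType) (i : Fin 2),
      Cardinal.mk H = κ ∧ ∀ α ∈ H, ∀ β ∈ H, α < β → F α β = i := by
  classical
  -- pick an element of each A_α
  have pick : ∀ α : κ.ord.ToType, ∃ γ : κ.ord.ToType,
      α < γ ∧ ∀ β < α, F β γ = h β := by
    intro α
    have h1 : Cardinal.mk {γ : κ.ord.ToType | α < γ ∧ ∀ β < α, F β γ = h β} ≠ 0 := by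
      rw [hA α]; exact hreg.pos.ne'
    rw [Cardinal.mk_ne_zero_iff] at h1
    obtain ⟨⟨γ, hγ1, hγ2⟩⟩ := h1
    exact ⟨γ, hγ1, hγ2⟩
  choose pk hpk1 hpk2 using pick
  haveI : Nonempty κ.ord.ToType :=
    Ordinal.nonempty_toType_iff.2 (by
      simp only [ne_eq, Cardinal.ord_eq_zero]
      exact hreg.pos.ne')
  -- small subsets are bounded
  have bound : ∀ s : Set κ.ord.ToType, Cardinal.mk s < κ →
      ∃ b : κ.ord.ToType, ∀ x ∈ s, x < b := by
    intro s hs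
    haveI : IsWellOrder κ.ord.ToType (· < ·) := isWellOrder_lt
    by_contra hne
    push_neg at hne
    have hc : IsCofinal s := fun a => by obtain ⟨x, hx, hax⟩ := hne a; exact ⟨x, hx, hax⟩
    have := Order.cof_le hc
    rw [Ordinal.cof_toType, hreg.cof_eq] at this
    exact absurd this hs.not_ge
  set bd : Set κ.ord.ToType → κ.ord.ToType := fun s =>
    if hs : ∃ b : κ.ord.ToType, ∀ x ∈ s, x < b then hs.choose
    else Classical.arbitrary κ.ord.ToType
    with hbd_def
  have hbd : ∀ s : Set κ.ord.ToType, Cardinal.mk s < κ → ∀ x ∈ s, x < bd s := by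
    intro s hs x hx
    have hb := bound s hs
    simp only [hbd_def, dif_pos hb]
    exact hb.choose_spec x hx
  set f : κ.ord.ToType → κ.ord.ToType := brFix pk bd with hf_def
  have hsmall : ∀ γ : κ.ord.ToType, Cardinal.mk (f '' Set.Iio γ) < κ := fun γ =>
    lt_of_le_of_lt (Cardinal.mk_image_le) (Cardinal.mk_Iio_toType_ord_lt γ)
  have key : ∀ β γ : κ.ord.ToType, β < γ →
      f β < f γ ∧ F (f β) (f γ) = h (f β) := by
    intro β γ hβγ
    have h1 : f β < bd (f '' Set.Iio γ) := hbd _ (hsmall γ) _ ⟨β, hβγ, rfl⟩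
    have h2 : f γ = pk (bd (f '' Set.Iio γ)) := brFix_eq pk bd γ
    refine ⟨?_, ?_⟩
    · rw [h2]; exact h1.trans (hpk1 _)
    · rw [h2]; exact hpk2 _ _ h1
  have hmono : StrictMono f := fun a b hab => (key a b hab).1
  have hmkT : Cardinal.mk κ.ord.ToType = κ := by
    rw [Cardinal.mk_toType, Cardinal.card_ord]
  -- split the range of f by color
  set S : Fin 2 → Set κ.ord.ToType := fun i => Set.range f ∩ h ⁻¹' {i} with hS_def
  have hcover : Set.range f ⊆ S 0 ∪ S 1 := by
    intro x hx
    have h2 : h x = 0 ∨ h x = 1 := by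
      rcases h x with ⟨v, hv⟩
      interval_cases v
      · exact Or.inl rfl
      · exact Or.inr rfl
    rcases h2 with h2 | h2
    · exact Or.inl ⟨hx, h2⟩
    · exact Or.inr ⟨hx, h2⟩
  have hrange : Cardinal.mk (Set.range f) = κ := by
    rw [Cardinal.mk_range_eq f hmono.injective, hmkT]
  have hex : ∃ i : Fin 2, κ ≤ Cardinal.mk (S i) := by
    by_contra hc
    push_neg at hc
    have h0 := hc 0
    have h1 := hc 1
    have hlt : Cardinal.mk (S 0 ∪ S 1 : Set κ.ord.ToType) < κ :=
      lt_of_le_of_lt (Cardinal.mk_union_le _ _)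
        (Cardinal.add_lt_of_lt hreg.aleph0_le h0 h1)
    have hle := Cardinal.mk_le_mk_of_subset hcover
    rw [hrange] at hle
    exact absurd hle hlt.not_ge
  obtain ⟨i, hi⟩ := hex
  refine ⟨S i, i, le_antisymm (le_trans (Cardinal.mk_set_le _) (le_of_eq hmkT)) hi, ?_⟩
  rintro α ⟨⟨a, rfl⟩, hα2⟩ β ⟨⟨b, rfl⟩, hβ2⟩ hab
  have hab' : a < b := by
    by_contra hle
    push_neg at hle
    rcases lt_or_eq_of_le hle with hlt | rfl
    · exact absurd (hmono hlt) (asymm hab)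
    · exact lt_irrefl _ hab
  have hF := (key a b hab').2
  rw [hF]
  exact hα2
end

section
/- Let κ be a regular uncountable cardinal such that every coloring F of the pairs of ordinals below κ with values in Fin 2 has a homogeneous set of cardinality κ. Let <_T be a partial order on the set of ordinals below κ such that for every t < κ the set of <_T-predecessors of t is well-ordered by <_T; for α < κ let T_α (the α-th level) be the set of t < κ whose set of <_T-predecessors has order type α under <_T. Assume that every level T_α has cardinality < κ and that T_α is nonempty for every α < κ. Then there is a set B ⊆ κ that is linearly ordered by <_T and intersects every level T_α for α < κ (a cofinal branch). -/
section TreeAux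

variable {O : Type*}

/-- Membership in the downward chain of `x`: predecessors of `x` together with `x` itself. -/
def cmem (ltT : O → O → Prop) (s x : O) : Prop := ltT s x ∨ s = x

variable {ltT : O → O → Prop}

theorem cmem_trans (htrans : ∀ x y z, ltT x y → ltT y z → ltT x z)
    {s t x : O} (h1 : cmem ltT s t) (h2 : cmem ltT t x) : cmem ltT s x := by
  rcases h2 with h2 | rfl
  · rcases h1 with h1 | rfl
    · exact Or.inl (htrans _ _ _ h1 h2)
    · exact Or.inl h2
  · exact h1

theorem chain_tri (hwo : ∀ t : O, IsWellOrder {s : O // ltT s t} (fun a b => ltT a.1 b.1))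
    {x s t : O} (hs : cmem ltT s x) (ht : cmem ltT t x) :
    ltT s t ∨ s = t ∨ ltT t s := by
  rcases hs with hs | rfl
  · rcases ht with ht | rfl
    · rcases (letI := hwo x; trichotomous (r := fun a b : {s : O // ltT s x} => ltT a.1 b.1) ⟨s, hs⟩ ⟨t, ht⟩) with h | h | h
      · exact Or.inl h
      · exact Or.inr (Or.inl (congrArg Subtype.val h))
      · exact Or.inr (Or.inr h)
    · exact Or.inl hs
  · rcases ht with ht | rfl
    · exact Or.inr (Or.inr ht)
    · exact Or.inr (Or.inl rfl)

variable (ltT) in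
/-- The `ltT`-least element of the chain of `x` (including `x`) which is not in the
chain of `y`. -/
noncomputable def tdiff
    (hwo : ∀ t : O, IsWellOrder {s : O // ltT s t} (fun a b => ltT a.1 b.1))
    (x y : O) : O :=
  @dite _ ({s : {s : O // ltT s x} | ¬ cmem ltT s.1 y}.Nonempty) (Classical.dec _)
    (fun h => ((hwo x).toIsWellFounded.wf.min {s : {s : O // ltT s x} | ¬ cmem ltT s.1 y} h).1)
    (fun _ => x)

variable (hwo : ∀ t : O, IsWellOrder {s : O // ltT s t} (fun a b => ltT a.1 b.1))

theorem tdiff_mem {x y : O} (hxy : ¬ cmem ltT x y) :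
    cmem ltT (tdiff ltT hwo x y) x ∧ ¬ cmem ltT (tdiff ltT hwo x y) y := by
  unfold tdiff
  split_ifs with h
  · exact ⟨Or.inl ((hwo x).toIsWellFounded.wf.min _ h).2,
      (hwo x).toIsWellFounded.wf.min_mem _ h⟩
  · exact ⟨Or.inr rfl, hxy⟩

theorem tdiff_min (hirr : ∀ x, ¬ ltT x x) (htrans : ∀ x y z, ltT x y → ltT y z → ltT x z)
    {x y : O} (_hxy : ¬ cmem ltT x y) {s : O} (hs : cmem ltT s x) (hsy : ¬ cmem ltT s y) :
    ¬ ltT s (tdiff ltT hwo x y) := by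
  unfold tdiff
  split_ifs with h
  · rcases hs with hs | rfl
    · exact fun hlt => (hwo x).toIsWellFounded.wf.not_lt_min _
        (show (⟨s, hs⟩ : {s : O // ltT s x}) ∈ _ from hsy) hlt
    · intro hlt
      exact hirr s (htrans _ _ _ hlt ((hwo s).toIsWellFounded.wf.min _ h).2)
  · rcases hs with hs | rfl
    · exact fun _ => h ⟨⟨s, hs⟩, hsy⟩
    · exact hirr s

theorem tdiff_unique (hirr : ∀ x, ¬ ltT x x) (htrans : ∀ x y z, ltT x y → ltT y z → ltT x z)
    {x y : O} (hxy : ¬ cmem ltT x y) {d : O}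
    (hd1 : cmem ltT d x) (hd2 : ¬ cmem ltT d y)
    (hmin : ∀ s, cmem ltT s x → ¬ cmem ltT s y → ¬ ltT s d) :
    tdiff ltT hwo x y = d := by
  obtain ⟨tm1, tm2⟩ := tdiff_mem hwo hxy
  rcases chain_tri hwo tm1 hd1 with h | h | h
  · exact absurd h (hmin _ tm1 tm2)
  · exact h
  · exact absurd h (tdiff_min hwo hirr htrans hxy hd1 hd2)

theorem tdiff_cone (hirr : ∀ x, ¬ ltT x x) (htrans : ∀ x y z, ltT x y → ltT y z → ltT x z)
    {u v a b : O} (hu : cmem ltT u a) (hv : cmem ltT v b)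
    (huv : ¬ cmem ltT u v) (hvu : ¬ cmem ltT v u) :
    (¬ cmem ltT a b ∧ ¬ cmem ltT b a) ∧ tdiff ltT hwo a b = tdiff ltT hwo u v := by
  have hab : ¬ cmem ltT a b := by
    intro h
    rcases chain_tri hwo (cmem_trans htrans hu h) hv with h1 | h1 | h1
    · exact huv (Or.inl h1)
    · exact huv (Or.inr h1)
    · exact hvu (Or.inl h1)
  have hba : ¬ cmem ltT b a := by
    intro h
    rcases chain_tri hwo (cmem_trans htrans hv h) hu with h1 | h1 | h1
    · exact hvu (Or.inl h1)
    · exact hvu (Or.inr h1)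
    · exact huv (Or.inl h1)
  obtain ⟨dm1, dm2⟩ := tdiff_mem hwo huv
  have hd1 : cmem ltT (tdiff ltT hwo u v) a := cmem_trans htrans dm1 hu
  have hd2 : ¬ cmem ltT (tdiff ltT hwo u v) b := by
    intro h
    rcases chain_tri hwo h hv with h1 | h1 | h1
    · exact dm2 (Or.inl h1)
    · exact dm2 (Or.inr h1)
    · rcases chain_tri hwo (cmem_trans htrans (Or.inl h1) hd1) hu with h2 | h2 | h2
      · exact hvu (Or.inl h2)
      · exact hvu (Or.inr h2)
      · exact huv (Or.inl h2)
  have hmin : ∀ s, cmem ltT s a → ¬ cmem ltT s b → ¬ ltT s (tdiff ltT hwo u v) := by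
    intro s _hsa hsb hlt
    have hsu : cmem ltT s u := cmem_trans htrans (Or.inl hlt) dm1
    have hsv : ¬ cmem ltT s v := fun h => hsb (cmem_trans htrans h hv)
    exact tdiff_min hwo hirr htrans huv hsu hsv hlt
  exact ⟨⟨hab, hba⟩, tdiff_unique hwo hirr htrans hab hd1 hd2 hmin⟩

variable [LinearOrder O]

variable (ltT) in
/-- A comparison relation on a tree order: either `x` is a tree-predecessor of `y`, or they are
incomparable and the first point where the chain of `x` leaves the chain of `y` is smaller than
the first point where the chain of `y` leaves the chain of `x`. -/
noncomputable def prec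
    (hwo : ∀ t : O, IsWellOrder {s : O // ltT s t} (fun a b => ltT a.1 b.1))
    (x y : O) : Prop :=
  ltT x y ∨ (¬ cmem ltT x y ∧ ¬ cmem ltT y x ∧ tdiff ltT hwo x y < tdiff ltT hwo y x)

theorem prec_total {x y : O} (hne : x ≠ y) : prec ltT hwo x y ∨ prec ltT hwo y x := by
  by_cases h1 : ltT x y
  · exact Or.inl (Or.inl h1)
  by_cases h2 : ltT y x
  · exact Or.inr (Or.inl h2)
  have hxy : ¬ cmem ltT x y := fun h => h.elim h1 hne
  have hyx : ¬ cmem ltT y x := fun h => h.elim h2 (fun e => hne e.symm)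
  have hne' : tdiff ltT hwo x y ≠ tdiff ltT hwo y x := by
    intro h
    exact (tdiff_mem hwo hxy).2 (h ▸ (tdiff_mem hwo hyx).1)
  rcases lt_or_gt_of_ne hne' with h | h
  · exact Or.inl (Or.inr ⟨hxy, hyx, h⟩)
  · exact Or.inr (Or.inr ⟨hyx, hxy, h⟩)

theorem prec_asymm (hirr : ∀ x, ¬ ltT x x) (htrans : ∀ x y z, ltT x y → ltT y z → ltT x z)
    {x y : O} (h1 : prec ltT hwo x y) (h2 : prec ltT hwo y x) : False := by
  rcases h1 with h1 | ⟨h1a, h1b, h1c⟩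
  · rcases h2 with h2 | ⟨_, h2b, _⟩
    · exact hirr x (htrans _ _ _ h1 h2)
    · exact h2b (Or.inl h1)
  · rcases h2 with h2 | ⟨_, _, h2c⟩
    · exact h1b (Or.inl h2)
    · exact lt_asymm h1c h2c

theorem prec_cone (hirr : ∀ x, ¬ ltT x x) (htrans : ∀ x y z, ltT x y → ltT y z → ltT x z)
    {u v a b : O} (hu : cmem ltT u a) (hv : cmem ltT v b)
    (huv : ¬ cmem ltT u v) (hvu : ¬ cmem ltT v u) :
    prec ltT hwo a b ↔ prec ltT hwo u v := by
  obtain ⟨⟨hab, hba⟩, he⟩ := tdiff_cone hwo hirr htrans hu hv huv hvu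
  obtain ⟨-, he'⟩ := tdiff_cone hwo hirr htrans hv hu hvu huv
  constructor
  · rintro (h | ⟨-, -, h⟩)
    · exact absurd (Or.inl h) hab
    · exact Or.inr ⟨huv, hvu, by rwa [he, he'] at h⟩
  · rintro (h | ⟨-, -, h⟩)
    · exact absurd (Or.inl h) huv
    · exact Or.inr ⟨hab, hba, by rwa [he, he']⟩

end TreeAux

/-- If `κ` is a regular uncountable cardinal with the partition property
`κ → (κ)²₂`, then every `κ`-tree (a tree order on the ordinals below `κ` all
of whose levels are nonempty and of cardinality `< κ`) has a cofinal branch. -/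
theorem definable_tree_property_of_partition (κ : Cardinal)
    (hreg : κ.IsRegular) (hκ : Cardinal.aleph0 < κ)
    (hpart : ∀ F : κ.ord.ToType → κ.ord.ToType → Fin 2,
      ∃ (H : Set κ.ord.ToType) (c : Fin 2),
        Cardinal.mk H = κ ∧ ∀ a ∈ H, ∀ b ∈ H, a < b → F a b = c)
    (ltT : κ.ord.ToType → κ.ord.ToType → Prop)
    (hirr : ∀ x, ¬ ltT x x)
    (htrans : ∀ x y z, ltT x y → ltT y z → ltT x z)
    (hwo : ∀ t : κ.ord.ToType,
      IsWellOrder {s : κ.ord.ToType // ltT s t} (fun a b => ltT a.1 b.1))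
    (level : Ordinal → Set κ.ord.ToType)
    (hlevel : ∀ (α : Ordinal) (t : κ.ord.ToType), t ∈ level α ↔
      @Ordinal.type {s : κ.ord.ToType // ltT s t} (fun a b => ltT a.1 b.1) (hwo t) = α)
    (hsmall : ∀ α < κ.ord, Cardinal.mk (level α) < κ)
    (hne : ∀ α < κ.ord, (level α).Nonempty) :
    ∃ B : Set κ.ord.ToType,
      (∀ x ∈ B, ∀ y ∈ B, x ≠ y → ltT x y ∨ ltT y x) ∧
      ∀ α < κ.ord, ∃ t ∈ B, t ∈ level α := by
  classical
  -- the coloring induced by the comparison relation `prec`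
  set F : κ.ord.ToType → κ.ord.ToType → Fin 2 := fun a b => if prec ltT hwo a b then 0 else 1 with hF
  obtain ⟨H, c, hHcard, hHom⟩ := hpart F
  -- the height function
  set ht : κ.ord.ToType → Ordinal := fun z =>
    @Ordinal.type {s : κ.ord.ToType // ltT s z} (fun a b => ltT a.1 b.1) (hwo z) with hht
  -- unbounded subsets of cardinality `≥ κ`
  have hbig : ∀ S : Set κ.ord.ToType, κ ≤ Cardinal.mk S → ∀ z : κ.ord.ToType, ∃ s ∈ S, z < s := by
    intro S hS z
    by_contra hcon
    push_neg at hcon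
    have hsub : S ⊆ Set.Iic z := fun s hs => hcon s hs
    have h1 : Cardinal.mk S ≤ Cardinal.mk (Set.Iic z) := Cardinal.mk_le_mk_of_subset hsub
    have h2 : Cardinal.mk (Set.Iic z) < κ := by
      calc Cardinal.mk (Set.Iic z) ≤ Cardinal.mk (Set.Iio z) + 1 := by
            rw [← Set.Iio_insert]; exact Cardinal.mk_insert_le
        _ < κ := Cardinal.add_lt_of_lt hκ.le (Cardinal.mk_Iio_ord_toType z)
            (Cardinal.one_lt_aleph0.trans hκ)
    exact absurd (lt_of_le_of_lt hS (lt_of_le_of_lt h1 h2)) (lt_irrefl κ)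
  -- the candidate branch
  refine ⟨{t : κ.ord.ToType | κ ≤ Cardinal.mk {h : κ.ord.ToType | h ∈ H ∧ ltT t h}}, ?_, ?_⟩
  · -- the branch is a chain
    intro x hx y hy hxy0
    by_contra hcon
    push_neg at hcon
    obtain ⟨hnx, hny⟩ := hcon
    have hcx : ¬ cmem ltT x y := fun h => h.elim hnx hxy0
    have hcy : ¬ cmem ltT y x := fun h => h.elim hny (fun e => hxy0 e.symm)
    have key : ∀ p q : κ.ord.ToType, ¬ cmem ltT p q → ¬ cmem ltT q p →
        κ ≤ Cardinal.mk {h : κ.ord.ToType | h ∈ H ∧ ltT p h} →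
        κ ≤ Cardinal.mk {h : κ.ord.ToType | h ∈ H ∧ ltT q h} → prec ltT hwo p q → False := by
      intro p q hpq hqp hSp hSq hprec
      -- pick `h1` in the cone over `q` and `h2 > h1` in the cone over `p`
      obtain ⟨⟨h1, hh1⟩⟩ : Nonempty ↥{h : κ.ord.ToType | h ∈ H ∧ ltT q h} :=
        Cardinal.mk_ne_zero_iff.1 (lt_of_lt_of_le hreg.pos hSq).ne'
      obtain ⟨h2, hh2, hlt12⟩ := hbig _ hSp h1
      -- pick `h1'` in the cone over `p` and `h2' > h1'` in the cone over `q`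
      obtain ⟨⟨h1', hh1'⟩⟩ : Nonempty ↥{h : κ.ord.ToType | h ∈ H ∧ ltT p h} :=
        Cardinal.mk_ne_zero_iff.1 (lt_of_lt_of_le hreg.pos hSp).ne'
      obtain ⟨h2', hh2', hlt12'⟩ := hbig _ hSq h1'
      have e1 : F h1 h2 = c := hHom h1 hh1.1 h2 hh2.1 hlt12
      have e2 : F h1' h2' = c := hHom h1' hh1'.1 h2' hh2'.1 hlt12'
      have c21 : prec ltT hwo h2 h1 :=
        (prec_cone hwo hirr htrans (Or.inl hh2.2) (Or.inl hh1.2) hpq hqp).2 hprec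
      have c12 : prec ltT hwo h1' h2' :=
        (prec_cone hwo hirr htrans (Or.inl hh1'.2) (Or.inl hh2'.2) hpq hqp).2 hprec
      have f1 : F h1 h2 = 1 := if_neg (fun h => prec_asymm hwo hirr htrans h c21)
      have f2 : F h1' h2' = 0 := if_pos c12
      have : (0 : Fin 2) = 1 := by rw [← f2, e2, ← e1, f1]
      exact absurd this (by decide)
    rcases prec_total hwo hxy0 with h | h
    · exact key x y hcx hcy hx hy h
    · exact key y x hcy hcx hy hx h
  · -- the branch meets every level
    intro α hα
    have hocard : (Order.succ α).card < κ := by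
      rw [Ordinal.card_succ]
      exact Cardinal.add_lt_of_lt hκ.le (Cardinal.lt_ord.1 hα)
        (Cardinal.one_lt_aleph0.trans hκ)
    have hoord : Order.succ α < κ.ord := Cardinal.lt_ord.2 hocard
    -- the set of elements of height `≤ α` is small
    have hsmallSet : Cardinal.mk {z : κ.ord.ToType | ht z ≤ α} < κ := by
      have hle : Cardinal.mk {z : κ.ord.ToType | ht z ≤ α} ≤
          Cardinal.sum (fun b : (Order.succ α).ToType =>
            Cardinal.mk (level (@Ordinal.typein ((Order.succ α).ToType) (· < ·) isWellOrder_lt b))) := by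
        rw [← Cardinal.mk_sigma]
        have hlt : ∀ z : {z : κ.ord.ToType // ht z ≤ α},
            ht z.1 < @Ordinal.type ((Order.succ α).ToType) (· < ·) isWellOrder_lt := by
          intro z
          rw [Ordinal.type_toType]
          exact lt_of_le_of_lt z.2 (Order.lt_succ α)
        refine Cardinal.mk_le_of_injective (f := fun z =>
          ⟨@Ordinal.enum ((Order.succ α).ToType) (· < ·) isWellOrder_lt ⟨ht z.1, hlt z⟩,
            ⟨z.1, (hlevel _ z.1).2 (@Ordinal.typein_enum ((Order.succ α).ToType) (· < ·) isWellOrder_lt _ (hlt z)).symm⟩⟩) ?_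
        intro z1 z2 h
        exact Subtype.ext (congrArg (fun p : (Σ b : (Order.succ α).ToType,
          ↥(level (@Ordinal.typein ((Order.succ α).ToType) (· < ·) isWellOrder_lt b))) =>
            (p.2 : κ.ord.ToType)) h)
      refine lt_of_le_of_lt hle (Cardinal.sum_lt_of_isRegular hreg ?_ ?_)
      · rw [Cardinal.mk_toType]; exact hocard
      · intro b
        exact hsmall _ (lt_trans (Ordinal.typein_lt_self b) hoord)
    -- the set of elements of `H` of height `> α` is large
    have hbigH : κ ≤ Cardinal.mk {h : κ.ord.ToType | h ∈ H ∧ α < ht h} := by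
      by_contra hcon
      push_neg at hcon
      have hsub : H ⊆ {h : κ.ord.ToType | h ∈ H ∧ α < ht h} ∪ {z : κ.ord.ToType | ht z ≤ α} := by
        intro h hh
        by_cases hc : α < ht h
        · exact Or.inl ⟨hh, hc⟩
        · exact Or.inr (le_of_not_gt hc)
      have h1 := (Cardinal.mk_le_mk_of_subset hsub).trans (Cardinal.mk_union_le _ _)
      rw [hHcard] at h1
      exact absurd h1 (Cardinal.add_lt_of_lt hκ.le hcon hsmallSet).not_ge
    -- every element of height `> α` has a predecessor at level `α`
    have hsel : ∀ h : κ.ord.ToType, α < ht h → ∃ t : κ.ord.ToType, t ∈ level α ∧ ltT t h := by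
      intro h hh
      letI := hwo h
      have hh' : α < Ordinal.type (fun a b : {s : κ.ord.ToType // ltT s h} => ltT a.1 b.1) := hh
      set s := Ordinal.enum (fun a b : {s : κ.ord.ToType // ltT s h} => ltT a.1 b.1) ⟨α, hh'⟩ with hs
      refine ⟨s.1, ?_, s.2⟩
      rw [hlevel]
      have iso : (fun a b : {q : κ.ord.ToType // ltT q s.1} => ltT a.1 b.1) ≃r
          Subrel (fun a b : {s : κ.ord.ToType // ltT s h} => ltT a.1 b.1)
            {b : {s : κ.ord.ToType // ltT s h} | ltT b.1 s.1} :=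
        { toFun := fun q => ⟨⟨q.1, htrans _ _ _ q.2 s.2⟩, q.2⟩
          invFun := fun p => ⟨p.1.1, p.2⟩
          left_inv := fun q => rfl
          right_inv := fun p => rfl
          map_rel_iff' := Iff.rfl }
      calc @Ordinal.type {q : κ.ord.ToType // ltT q s.1} (fun a b => ltT a.1 b.1) (hwo s.1)
          = Ordinal.type (Subrel (fun a b : {s : κ.ord.ToType // ltT s h} => ltT a.1 b.1)
              (fun b : {s : κ.ord.ToType // ltT s h} => ltT b.1 s.1)) := Ordinal.type_eq.2 ⟨iso⟩
        _ = Ordinal.typein (fun a b : {s : κ.ord.ToType // ltT s h} => ltT a.1 b.1) s :=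
            Ordinal.type_subrel _ _
        _ = α := Ordinal.typein_enum _ _
    -- choose such predecessors
    choose g hg1 hg2 using fun h : {h : κ.ord.ToType // h ∈ H ∧ α < ht h} => hsel h.1 h.2.2
    set pm : {h : κ.ord.ToType // h ∈ H ∧ α < ht h} → ↥(level α) := fun h => ⟨g h, hg1 h⟩ with hpm
    -- pigeonhole: some predecessor has `κ`-many elements of `H` above it
    have hfib : ∃ b : ↥(level α), κ ≤ Cardinal.mk {h : {h : κ.ord.ToType // h ∈ H ∧ α < ht h} // pm h = b} := by
      by_contra hcon
      push_neg at hcon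
      have he : Cardinal.mk {h : κ.ord.ToType // h ∈ H ∧ α < ht h} =
          Cardinal.sum (fun b : ↥(level α) =>
            Cardinal.mk {h : {h : κ.ord.ToType // h ∈ H ∧ α < ht h} // pm h = b}) := by
        rw [← Cardinal.mk_sigma]
        exact Cardinal.mk_congr (Equiv.sigmaFiberEquiv pm).symm
      have h2 : Cardinal.mk {h : κ.ord.ToType // h ∈ H ∧ α < ht h} < κ := by
        rw [he]
        exact Cardinal.sum_lt_of_isRegular hreg (hsmall α hα) hcon
      exact absurd (lt_of_le_of_lt hbigH h2) (lt_irrefl κ)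
    obtain ⟨b, hb⟩ := hfib
    refine ⟨b.1, ?_, b.2⟩
    -- `b` belongs to the branch
    show κ ≤ Cardinal.mk {h : κ.ord.ToType | h ∈ H ∧ ltT b.1 h}
    refine hb.trans (Cardinal.mk_le_of_injective (f := fun x => ?_) ?_)
    · refine ⟨x.1.1, x.1.2.1, ?_⟩
      have h1 : g x.1 = b.1 := congrArg Subtype.val x.2
      have h2 := hg2 x.1
      rwa [h1] at h2
    · intro x y h
      have hval : (x.1 : κ.ord.ToType) = (y.1 : κ.ord.ToType) :=
        congrArg (fun p : ↥{h : κ.ord.ToType | h ∈ H ∧ ltT b.1 h} => (p : κ.ord.ToType)) h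
      exact Subtype.ext (Subtype.ext hval)
end

section
/- Let <_T be a partial order on the set of ordinals below ω₁ such that for every t < ω₁ the set of <_T-predecessors of t is well-ordered by <_T. Then there exists a strict linear order ≺ on the ordinals below ω₁ such that: (i) if s <_T t then s ≺ t; and (ii) whenever x and y are <_T-incomparable with x ≺ y, and x ≤_T α and y ≤_T β (where s ≤_T t means s = t or s <_T t), then α ≺ β. -/
/-- Any tree order `<_T` on the countable ordinals extends to a strict linear
order `≺` such that, whenever `x ≺ y` are `<_T`-incomparable, any `α` above
`x` and `β` above `y` (in the order `≤_T`) satisfy `α ≺ β`. -/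
theorem lex_extension_of_tree_order
    (ltT : (Cardinal.aleph 1).ord.ToType → (Cardinal.aleph 1).ord.ToType → Prop)
    (hirr : ∀ x, ¬ ltT x x)
    (htrans : ∀ x y z, ltT x y → ltT y z → ltT x z)
    (hwo : ∀ t : (Cardinal.aleph 1).ord.ToType,
      IsWellOrder {s : (Cardinal.aleph 1).ord.ToType // ltT s t}
        (fun a b => ltT a.1 b.1)) :
    ∃ prec : (Cardinal.aleph 1).ord.ToType → (Cardinal.aleph 1).ord.ToType → Prop,
      (∀ x, ¬ prec x x) ∧
      (∀ x y z, prec x y → prec y z → prec x z) ∧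
      (∀ x y, x ≠ y → prec x y ∨ prec y x) ∧
      (∀ s t, ltT s t → prec s t) ∧
      (∀ x y α β, ¬ (x = y ∨ ltT x y) → ¬ (y = x ∨ ltT y x) → prec x y →
        (x = α ∨ ltT x α) → (y = β ∨ ltT y β) → prec α β) := by
  classical
  -- `le` is the reflexive closure of `ltT`
  set le : (Cardinal.aleph 1).ord.ToType → (Cardinal.aleph 1).ord.ToType → Prop :=
    fun a b => a = b ∨ ltT a b with hle
  have hle_refl : ∀ a, le a a := fun a => Or.inl rfl
  have hle_trans : ∀ a b c, le a b → le b c → le a c := by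
    rintro a b c (rfl | h1) (rfl | h2)
    · exact Or.inl rfl
    · exact Or.inr h2
    · exact Or.inr h1
    · exact Or.inr (htrans _ _ _ h1 h2)
  have hasymm : ∀ a b, le a b → ltT b a → False := by
    rintro a b (rfl | h1) h2
    · exact hirr _ h2
    · exact hirr _ (htrans _ _ _ h1 h2)
  have hle_antisymm : ∀ a b, le a b → le b a → a = b := by
    rintro a b (rfl | h1) h2
    · rfl
    · exact absurd h1 (fun h => hasymm _ _ h2 h)
  -- elements below a common element are comparable
  have tri : ∀ s s' t, le s t → le s' t → ltT s s' ∨ s = s' ∨ ltT s' s := by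
    rintro s s' t hs hs'
    rcases hs with rfl | hs
    · rcases hs' with rfl | hs'
      · exact Or.inr (Or.inl rfl)
      · exact Or.inr (Or.inr hs')
    rcases hs' with rfl | hs'
    · exact Or.inl hs
    rcases @trichotomous_of _ _ (hwo t).toTrichotomous ⟨s, hs⟩ ⟨s', hs'⟩ with
      h | h | h
    · exact Or.inl h
    · exact Or.inr (Or.inl (congrArg Subtype.val h))
    · exact Or.inr (Or.inr h)
  have chain : ∀ s s' t, le s t → le s' t → le s s' ∨ le s' s := by
    intro s s' t hs hs'
    rcases tri s s' t hs hs' with h | h | h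
    · exact Or.inl (Or.inr h)
    · exact Or.inl (Or.inl h)
    · exact Or.inr (Or.inr h)
  -- the divergence point D a b : least element of the chain below a which is not below b
  have hDex : ∀ a b, ∃ d, (¬ le a b ∧ ¬ le b a) →
      (le d a ∧ ¬ le d b ∧ ∀ s, le s a → ¬ le s b → le d s) := by
    intro a b
    by_cases hab : ¬ le a b ∧ ¬ le b a
    · by_cases hex : ∃ s : {s : (Cardinal.aleph 1).ord.ToType // ltT s a}, ¬ le s.1 b
      · have wf : WellFounded
            (fun u v : {s : (Cardinal.aleph 1).ord.ToType // ltT s a} => ltT u.1 v.1) :=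
          (hwo a).toIsWellFounded.wf
        have hne : {s : {s : (Cardinal.aleph 1).ord.ToType // ltT s a} | ¬ le s.1 b}.Nonempty :=
          hex
        set d := wf.min _ hne with hd
        refine ⟨d.1, fun _ => ⟨Or.inr d.2, wf.min_mem _ hne, ?_⟩⟩
        rintro s (rfl | hs) hsb
        · exact Or.inr d.2
        · have hmem : (⟨s, hs⟩ : {s : (Cardinal.aleph 1).ord.ToType // ltT s a}) ∈
              {s : {s : (Cardinal.aleph 1).ord.ToType // ltT s a} | ¬ le s.1 b} := hsb
          have hnot := wf.not_lt_min _ hmem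
          rcases @trichotomous_of _ _ (hwo a).toTrichotomous d ⟨s, hs⟩ with
            h | h | h
          · exact Or.inr h
          · exact Or.inl (congrArg Subtype.val h)
          · exact absurd h hnot
      · push_neg at hex
        refine ⟨a, fun _ => ⟨hle_refl a, hab.1, ?_⟩⟩
        rintro s (rfl | hs) hsb
        · exact hle_refl _
        · exact absurd (hex ⟨s, hs⟩) (fun h => hsb h)
    · exact ⟨a, fun h => absurd h hab⟩
  choose D hD using hDex
  have Dle : ∀ a b, ¬ le a b → ¬ le b a → le (D a b) a := fun a b h1 h2 => (hD a b ⟨h1, h2⟩).1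
  have Dnot : ∀ a b, ¬ le a b → ¬ le b a → ¬ le (D a b) b := fun a b h1 h2 => (hD a b ⟨h1, h2⟩).2.1
  have Dmin : ∀ a b, ¬ le a b → ¬ le b a → ∀ s, le s a → ¬ le s b → le (D a b) s :=
    fun a b h1 h2 => (hD a b ⟨h1, h2⟩).2.2
  -- anything strictly below the divergence point (and below a) is below b
  have hlt_le : ∀ a b w, ¬ le a b → ¬ le b a → le w a → ltT w (D a b) → le w b := by
    intro a b w h1 h2 hwa hwd
    by_contra hwb
    exact hasymm _ _ (Dmin a b h1 h2 w hwa hwb) hwd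
  -- uniqueness of the divergence point
  have Duniq : ∀ a b d, ¬ le a b → ¬ le b a → le d a → ¬ le d b →
      (∀ s, le s a → ¬ le s b → le d s) → d = D a b := by
    intro a b d h1 h2 hda hdb hmin
    exact hle_antisymm d (D a b) (hmin _ (Dle a b h1 h2) (Dnot a b h1 h2))
      (Dmin a b h1 h2 d hda hdb)
  -- cone invariance: incomparability passes up
  have cone_incomp : ∀ x y α β, ¬ le x y → ¬ le y x → le x α → le y β →
      ¬ le α β ∧ ¬ le β α := by
    intro x y α β hxy hyx hxα hyβ
    constructor
    · intro hαβ
      rcases chain x y β (hle_trans _ _ _ hxα hαβ) hyβ with h | h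
      · exact hxy h
      · exact hyx h
    · intro hβα
      rcases chain x y α hxα (hle_trans _ _ _ hyβ hβα) with h | h
      · exact hxy h
      · exact hyx h
  have coneD : ∀ x y α β, ¬ le x y → ¬ le y x → ¬ le α β → ¬ le β α →
      le x α → le y β → D α β = D x y := by
    intro x y α β hxy hyx hαβ hβα hxα hyβ
    refine (Duniq α β (D x y) hαβ hβα (hle_trans _ _ _ (Dle x y hxy hyx) hxα) ?_ ?_).symm
    · intro hdβ
      rcases chain (D x y) y β hdβ hyβ with h | h
      · exact Dnot x y hxy hyx h
      · exact hyx (hle_trans _ _ _ h (Dle x y hxy hyx))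
    · intro s hsα hsβ
      rcases chain s (D x y) α hsα (hle_trans _ _ _ (Dle x y hxy hyx) hxα) with h | h
      · refine Dmin x y hxy hyx s (hle_trans _ _ _ h (Dle x y hxy hyx)) ?_
        intro hsy
        exact hsβ (hle_trans _ _ _ hsy hyβ)
      · exact h
  -- key lemma: a common lower bound of a and c not below b forces divergence points to agree
  have L : ∀ a b c w, ¬ le a b → ¬ le b a → ¬ le c b → ¬ le b c →
      le w a → le w c → ¬ le w b → D b c = D b a ∧ D c b = D a b := by
    intro a b c w hab hba hcb hbc hwa hwc hwb
    constructor
    · refine (Duniq b c (D b a) hbc hcb (Dle b a hba hab) ?_ ?_).symm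
      · intro hdc
        rcases chain (D b a) w c hdc hwc with h | h
        · exact Dnot b a hba hab (hle_trans _ _ _ h hwa)
        · exact hwb (hle_trans _ _ _ h (Dle b a hba hab))
      · intro s hsb hsc
        refine Dmin b a hba hab s hsb ?_
        intro hsa
        rcases chain s w a hsa hwa with h | h
        · exact hsc (hle_trans _ _ _ h hwc)
        · exact hwb (hle_trans _ _ _ h hsb)
    · have hd1w : le (D a b) w := Dmin a b hab hba w hwa hwb
      refine (Duniq c b (D a b) hcb hbc (hle_trans _ _ _ hd1w hwc) (Dnot a b hab hba) ?_).symm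
      intro s hsc hsb
      rcases chain s w c hsc hwc with h | h
      · exact Dmin a b hab hba s (hle_trans _ _ _ h hwa) hsb
      · exact hle_trans _ _ _ hd1w h
  -- the linear extension
  refine ⟨fun a b => ltT a b ∨ (¬ le a b ∧ ¬ le b a ∧ D a b < D b a), ?_, ?_, ?_, ?_, ?_⟩
  · rintro x (h | ⟨h, -, -⟩)
    · exact hirr x h
    · exact h (hle_refl x)
  · -- transitivity
    rintro x y z hxy hyz
    rcases hxy with hxy | ⟨hxy, hyx, h1⟩
    · rcases hyz with hyz | ⟨hyz, hzy, h2⟩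
      · exact Or.inl (htrans _ _ _ hxy hyz)
      · -- ltT x y, y incomparable z
        by_cases hzx : le z x
        · exact absurd (hle_trans _ _ _ hzx (Or.inr hxy)) hzy
        by_cases hxz : le x z
        · rcases hxz with rfl | hxz
          · exact absurd (Or.inr hxy) hzy
          · exact Or.inl hxz
        have e1 := coneD x z y z hxz hzx hyz hzy (Or.inr hxy) (hle_refl z)
        have e2 := coneD z x z y hzx hxz hzy hyz (hle_refl z) (Or.inr hxy)
        refine Or.inr ⟨hxz, hzx, ?_⟩
        rw [← e1, ← e2]
        exact h2
    · rcases hyz with hyz | ⟨hyz, hzy, h2⟩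
      · -- x incomparable y, ltT y z
        by_cases hzx : le z x
        · exact absurd (hle_trans _ _ _ (Or.inr hyz) hzx) hyx
        by_cases hxz : le x z
        · rcases hxz with rfl | hxz
          · exact absurd (Or.inr hyz) hyx
          · exact Or.inl hxz
        have e1 := coneD x y x z hxy hyx hxz hzx (hle_refl x) (Or.inr hyz)
        have e2 := coneD y x z x hyx hxy hzx hxz (Or.inr hyz) (hle_refl x)
        refine Or.inr ⟨hxz, hzx, ?_⟩
        rw [e1, e2]
        exact h1
      · -- both incomparable
        by_cases hxz : le x z
        · rcases hxz with rfl | hxz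
          · exact absurd h1 (lt_asymm h2)
          · exact Or.inl hxz
        by_cases hzx : le z x
        · exfalso
          have e1 := coneD y z y x hyz hzy hyx hxy (hle_refl y) hzx
          have e2 := coneD z y x y hzy hyz hxy hyx hzx (hle_refl y)
          rw [← e1, ← e2] at h2
          exact lt_asymm h2 h1
        -- x, y, z pairwise incomparable
        refine Or.inr ⟨hxz, hzx, ?_⟩
        rcases tri (D z x) (D z y) z (Dle z x hzx hxz) (Dle z y hzy hyz) with hzz | hzz | hzz
        · -- ltT (D z x) (D z y) : w := D z x is below z and y, not below x
          have hwy : le (D z x) y := hlt_le z y _ hzy hyz (Dle z x hzx hxz) hzz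
          have hL := L z x y (D z x) hzx hxz hyx hxy (Dle z x hzx hxz) hwy (Dnot z x hzx hxz)
          -- hL : D x y = D x z ∧ D y x = D z x
          rw [← hL.1, ← hL.2]
          exact h1
        · -- D z x = D z y; compare D x y with D x z
          rcases tri (D x y) (D x z) x (Dle x y hxy hyx) (Dle x z hxz hzx) with hxx | hxx | hxx
          · -- ltT (D x y) (D x z) : w := D x y is below x and z, not below y
            have hwz : le (D x y) z := hlt_le x z _ hxz hzx (Dle x y hxy hyx) hxx
            have hL := L x y z (D x y) hxy hyx hzy hyz (Dle x y hxy hyx) hwz (Dnot x y hxy hyx)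
            -- hL : D y z = D y x ∧ D z y = D x y
            rw [hL.1, hL.2] at h2
            exact absurd h1 (lt_asymm h2)
          · -- D x y = D x z; compare D y x with D y z
            rcases tri (D y x) (D y z) y (Dle y x hyx hxy) (Dle y z hyz hzy) with hyy | hyy | hyy
            · -- ltT (D y x) (D y z) : w := D y x is below y and z, not below x
              have hwz : le (D y x) z := hlt_le y z _ hyz hzy (Dle y x hyx hxy) hyy
              have hL := L y x z (D y x) hyx hxy hzx hxz (Dle y x hyx hxy) hwz (Dnot y x hyx hxy)
              -- hL : D x z = D x y ∧ D z x = D y x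
              rw [hL.1, hL.2]
              exact h1
            · -- all three divergence data agree: chain the inequalities
              rw [← hxx, hzz]
              rw [hyy] at h1
              exact lt_trans h1 h2
            · -- ltT (D y z) (D y x) : w := D y z is below y and x, not below z
              have hwx : le (D y z) x := hlt_le y x _ hyx hxy (Dle y z hyz hzy) hyy
              have hL := L y z x (D y z) hyz hzy hxz hzx (Dle y z hyz hzy) hwx (Dnot y z hyz hzy)
              -- hL : D z x = D z y ∧ D x z = D y z
              rw [hL.1, hL.2]
              exact h2
          · -- ltT (D x z) (D x y) : w := D x z is below x and y, not below z
            have hwy : le (D x z) y := hlt_le x y _ hxy hyx (Dle x z hxz hzx) hxx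
            have hL := L x z y (D x z) hxz hzx hyz hzy (Dle x z hxz hzx) hwy (Dnot x z hxz hzx)
            -- hL : D z y = D z x ∧ D y z = D x z
            rw [← hL.1, ← hL.2]
            exact h2
        · -- ltT (D z y) (D z x) : w := D z y is below z and x, not below y
          have hwx : le (D z y) x := hlt_le z x _ hzx hxz (Dle z y hzy hyz) hzz
          have hL := L z y x (D z y) hzy hyz hxy hyx (Dle z y hzy hyz) hwx (Dnot z y hzy hyz)
          -- hL : D y x = D y z ∧ D x y = D z y
          rw [← hL.1, ← hL.2] at h2
          exact absurd h1 (lt_asymm h2)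
  · -- totality
    intro a b hab
    by_cases h1 : le a b
    · rcases h1 with rfl | h1
      · exact absurd rfl hab
      · exact Or.inl (Or.inl h1)
    by_cases h2 : le b a
    · rcases h2 with rfl | h2
      · exact absurd rfl hab
      · exact Or.inr (Or.inl h2)
    have hne : D a b ≠ D b a := by
      intro h
      exact Dnot a b h1 h2 (h ▸ Dle b a h2 h1)
    rcases lt_or_gt_of_ne hne with h | h
    · exact Or.inl (Or.inr ⟨h1, h2, h⟩)
    · exact Or.inr (Or.inr ⟨h2, h1, h⟩)
  · exact fun s t h => Or.inl h
  · -- lexicographic cone property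
    intro x y α β hxy hyx hp hxα hyβ
    rcases hp with hp | ⟨-, -, hp⟩
    · exact absurd (Or.inr hp) hxy
    have hc := cone_incomp x y α β hxy hyx hxα hyβ
    have e1 := coneD x y α β hxy hyx hc.1 hc.2 hxα hyβ
    have e2 := coneD y x β α hyx hxy hc.2 hc.1 hyβ hxα
    exact Or.inr ⟨hc.1, hc.2, by rw [e1, e2]; exact hp⟩
end
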